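/- Assume m_{-2} := ∫_{[0,1]} x^{-2} Λ(dx) < ∞. Then for every x ∈ [0,1] with Λ({x}) = 0, lim_{n→∞} Σ_{k=1}^{⌊nx⌋} p_{n,k} = m_{-2}^{-1} ∫_{[0,x]} y^{-2} Λ(dy). -/

import Mathlib

open MeasureTheory Filter Topology BoundedContinuousFunction
open scoped ENNReal NNReal

noncomputable section

/-- Collision rate `λ_{m,k} = ∫_{[0,1]} x^{k-2} (1-x)^{m-k} Λ(dx)`. -/
def lamColl (Λ : Measure ℝ) (m k : ℕ) : ℝ :=
  ∫ x in Set.Icc (0:ℝ) 1, x ^ (k - 2) * (1 - x) ^ (m - k) ∂Λ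

/-- Total collision rate `λ_m = Σ_{k=2}^m C(m,k) λ_{m,k}`. -/
def lamTot (Λ : Measure ℝ) (m : ℕ) : ℝ :=
  ∑ k ∈ Finset.Icc 2 m, (m.choose k : ℝ) * lamColl Λ m k

/-- `p_{m,k} = C(m,k+1) λ_{m,k+1} / λ_m`. -/
def pColl (Λ : Measure ℝ) (m k : ℕ) : ℝ :=
  (m.choose (k + 1) : ℝ) * lamColl Λ m (k + 1) / lamTot Λ m

/-- Adding to a spectrum the record of one collision of `j+1` blocks. -/
def addColl (j : ℕ) (x : ℕ → ℝ) : ℕ → ℝ := fun k => (if k = j + 1 then 1 else 0) + x k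

/-- `μ n` is the law of the collision spectrum `(X_{n,k})_{k ≥ 2}` of the `Λ`-coalescent
started from `n` blocks, viewed as a (probability) measure on `ℕ → ℝ` whose coordinate `k`
carries `X_{n,k}`; it is characterised by the distributional recursion obtained by
decomposing at the first collision. -/
def IsCollisionSpectrum (Λ : Measure ℝ) (μ : ℕ → Measure (ℕ → ℝ)) : Prop :=
  (∀ n, IsProbabilityMeasure (μ n)) ∧
  μ 1 = Measure.dirac (fun _ => (0:ℝ)) ∧
  ∀ n, 2 ≤ n → μ n = ∑ j ∈ Finset.Icc 1 (n - 1),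
      ENNReal.ofReal (pColl Λ n j) • (μ (n - j)).map (addColl j)

/-- `m_{-2} = ∫_{[0,1]} x^{-2} Λ(dx)`. -/
def mm2 (Λ : Measure ℝ) : ℝ≥0∞ :=
  ∫⁻ x in Set.Icc (0:ℝ) 1, ENNReal.ofReal (x⁻¹ ^ 2) ∂Λ

/-- The law of `1 - W`, i.e. the probability measure `m_{-2}^{-1} y^{-2} Λ(dy)` on `[0,1]`. -/
def lawY (Λ : Measure ℝ) : Measure ℝ :=
  (mm2 Λ)⁻¹ • (Λ.restrict (Set.Icc 0 1)).withDensity fun y => ENNReal.ofReal (y⁻¹ ^ 2)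

/-- The law of `W`: the pushforward of `lawY Λ` under `y ↦ 1 - y`, so that
`P{W ≤ x} = m_{-2}^{-1} ∫_{[1-x,1]} y^{-2} Λ(dy)`. -/
def lawW (Λ : Measure ℝ) : Measure ℝ := (lawY Λ).map fun y => 1 - y

namespace SPC
open Finset

def B (n k : ℕ) (y : ℝ) : ℝ := (n.choose k : ℝ) * (y ^ k * (1 - y) ^ (n - k))

lemma B_eval (n k : ℕ) (y : ℝ) : (bernsteinPolynomial ℝ n k).eval y = B n k y := by
  simp [bernsteinPolynomial, B]; ring

lemma B_nonneg {n k : ℕ} {y : ℝ} (h0 : 0 ≤ y) (h1 : y ≤ 1) : 0 ≤ B n k y :=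
  mul_nonneg (by positivity) (mul_nonneg (pow_nonneg h0 _) (pow_nonneg (by linarith) _))

lemma sum_B (n : ℕ) (y : ℝ) : ∑ k ∈ range (n+1), B n k y = 1 := by
  have := congrArg (Polynomial.eval y) (bernsteinPolynomial.sum ℝ n)
  simpa [Polynomial.eval_finset_sum, B_eval] using this

lemma sum_var_B (n : ℕ) (y : ℝ) :
    ∑ k ∈ range (n+1), ((n:ℝ)*y - k)^2 * B n k y = n * (y * (1-y)) := by
  have := congrArg (Polynomial.eval y) (bernsteinPolynomial.variance ℝ n)
  simp only [Polynomial.eval_finset_sum, Polynomial.eval_mul, Polynomial.eval_pow,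
    Polynomial.eval_sub, Polynomial.eval_smul, Polynomial.eval_natCast, Polynomial.eval_X,
    Polynomial.eval_one, B_eval, smul_eq_mul, nsmul_eq_mul] at this
  rw [this]; ring


lemma cheb {n : ℕ} {y : ℝ} (h0 : 0 ≤ y) (h1 : y ≤ 1) (s : Finset ℕ)
    (hs : s ⊆ range (n+1)) {c : ℝ} (hc : 0 < c)
    (hdev : ∀ k ∈ s, c ≤ |(n:ℝ)*y - k|) :
    ∑ k ∈ s, B n k y ≤ n * (y*(1-y)) / c^2 := by
  have step1 : ∑ k ∈ s, B n k y ≤ ∑ k ∈ s, ((n:ℝ)*y - k)^2/c^2 * B n k y := by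
    apply Finset.sum_le_sum; intro k hk
    have h : 1 ≤ ((n:ℝ)*y - k)^2/c^2 := by
      rw [le_div_iff₀ (by positivity), one_mul]
      calc c^2 ≤ |(n:ℝ)*y-k|^2 := by
              apply pow_le_pow_left₀ hc.le (hdev k hk)
        _ = ((n:ℝ)*y - k)^2 := sq_abs _
    nth_rewrite 1 [← one_mul (B n k y)]
    exact mul_le_mul_of_nonneg_right h (B_nonneg h0 h1)
  have step2 : ∑ k ∈ s, ((n:ℝ)*y - k)^2/c^2 * B n k y
      ≤ ∑ k ∈ range (n+1), ((n:ℝ)*y - k)^2/c^2 * B n k y :=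
    Finset.sum_le_sum_of_subset_of_nonneg hs
      (fun k _ _ => mul_nonneg (by positivity) (B_nonneg h0 h1))
  have step3 : ∑ k ∈ range (n+1), ((n:ℝ)*y - k)^2/c^2 * B n k y = n * (y*(1-y)) / c^2 := by
    rw [← sum_var_B n y, Finset.sum_div]
    exact Finset.sum_congr rfl fun k _ => by ring
  linarith

def T (n j : ℕ) (y : ℝ) : ℝ :=
  ∑ k ∈ Finset.Icc 2 j, (n.choose k : ℝ) * (y ^ (k-2) * (1-y)^(n-k))

lemma T_nonneg {n j : ℕ} {y : ℝ} (h0 : 0 ≤ y) (h1 : y ≤ 1) : 0 ≤ T n j y :=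
  Finset.sum_nonneg fun k _ =>
    mul_nonneg (by positivity) (mul_nonneg (pow_nonneg h0 _) (pow_nonneg (by linarith) _))

lemma sq_mul_T (n j : ℕ) (y : ℝ) : y^2 * T n j y = ∑ k ∈ Finset.Icc 2 j, B n k y := by
  rw [T, Finset.mul_sum]
  refine Finset.sum_congr rfl fun k hk => ?_
  have h2 : 2 ≤ k := (Finset.mem_Icc.mp hk).1
  have hy : y ^ k = y^2 * y^(k-2) := by rw [← pow_add]; congr 1; omega
  rw [B, hy]; ring

lemma sum_Icc_B_le (n j : ℕ) {y : ℝ} (h0 : 0 ≤ y) (h1 : y ≤ 1) :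
    ∑ k ∈ Finset.Icc 2 j, B n k y ≤ 1 := by
  have hfil : ∑ k ∈ (Finset.Icc 2 j).filter (· < n+1), B n k y
      = ∑ k ∈ Finset.Icc 2 j, B n k y := by
    apply Finset.sum_filter_of_ne
    intro k _ hB
    by_contra h
    exact hB (by simp [B, Nat.choose_eq_zero_of_lt (by omega : n < k)])
  rw [← hfil, ← sum_B n y]
  apply Finset.sum_le_sum_of_subset_of_nonneg
  · intro k hk
    simp only [Finset.mem_filter] at hk
    exact Finset.mem_range.mpr hk.2
  · exact fun k _ _ => B_nonneg h0 h1

lemma T_le {n j : ℕ} {y : ℝ} (hy : y ∈ Set.Ioo (0:ℝ) 1) : T n j y ≤ y⁻¹^2 := by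
  obtain ⟨hy0, hy1⟩ := hy
  have h := sum_Icc_B_le n j hy0.le hy1.le
  rw [← sq_mul_T] at h
  have : T n j y = y⁻¹^2 * (y^2 * T n j y) := by field_simp
  rw [this]
  calc y⁻¹^2 * (y^2 * T n j y) ≤ y⁻¹^2 * 1 := by
        apply mul_le_mul_of_nonneg_left h (by positivity)
    _ = y⁻¹^2 := mul_one _

lemma T_trunc (n j : ℕ) (y : ℝ) : T n j y = T n (min j n) y := by
  rw [T, T]
  apply (Finset.sum_subset (Finset.Icc_subset_Icc_right (min_le_left j n)) ?_).symm
  intro k hk hk'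
  simp only [Finset.mem_Icc] at hk hk'
  have : n < k := by omega
  simp [Nat.choose_eq_zero_of_lt this]


lemma tendsto_nat_mul_pow {r : ℝ} (h0 : 0 ≤ r) (h1 : r < 1) :
    Tendsto (fun n : ℕ => (n:ℝ) * r ^ (n-1)) atTop (𝓝 0) := by
  have ha : Tendsto (fun n : ℕ => ((n:ℝ)+1) * r ^ n) atTop (𝓝 0) := by
    have h2 := tendsto_self_mul_const_pow_of_lt_one h0 h1 (r := r)
    have h3 := tendsto_pow_atTop_nhds_zero_of_lt_one h0 h1 (r := r)
    have := h2.add h3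
    rw [add_zero] at this
    refine this.congr fun n => by ring
  have hcomp := ha.comp (tendsto_sub_atTop_nat 1)
  apply hcomp.congr'
  filter_upwards [eventually_ge_atTop 1] with n hn
  simp only [Function.comp_apply]
  congr 1
  rw [Nat.cast_sub hn]
  ring

lemma sum_Icc_two (n : ℕ) (hn : 2 ≤ n) (y : ℝ) :
    ∑ k ∈ Finset.Icc 2 n, B n k y = 1 - (1-y)^n - n * (y * (1-y)^(n-1)) := by
  have hset : Finset.range (n+1) = insert 0 (insert 1 (Finset.Icc 2 n)) := by
    ext k; simp only [Finset.mem_range, Finset.mem_insert, Finset.mem_Icc]; omega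
  have := sum_B n y
  rw [hset, Finset.sum_insert (by simp), Finset.sum_insert (by simp)] at this
  have hB0 : B n 0 y = (1-y)^n := by simp [B]
  have hB1 : B n 1 y = n * (y * (1-y)^(n-1)) := by
    simp only [B, Nat.choose_one_right, pow_one]
  rw [hB0, hB1] at this
  linarith

lemma tendsto_sq_T_diag {y : ℝ} (hy : y ∈ Set.Ioo (0:ℝ) 1) :
    Tendsto (fun n : ℕ => y^2 * T n n y) atTop (𝓝 1) := by
  obtain ⟨hy0, hy1⟩ := hy
  have h1 : Tendsto (fun n : ℕ => (1-y)^n) atTop (𝓝 0) :=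
    tendsto_pow_atTop_nhds_zero_of_lt_one (by linarith) (by linarith)
  have h2 : Tendsto (fun n : ℕ => (n:ℝ) * (y * (1-y)^(n-1))) atTop (𝓝 0) := by
    have := (tendsto_nat_mul_pow (r := 1-y) (by linarith) (by linarith)).const_mul y
    rw [mul_zero] at this
    refine this.congr fun n => by ring
  have := (tendsto_const_nhds (x := (1:ℝ)) (f := atTop)).sub h1 |>.sub h2
  norm_num at this
  apply this.congr'
  filter_upwards [eventually_ge_atTop 2] with n hn
  rw [sq_mul_T, sum_Icc_two n hn]

lemma tendsto_T_diag {y : ℝ} (hy : y ∈ Set.Ioo (0:ℝ) 1) :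
    Tendsto (fun n : ℕ => T n n y) atTop (𝓝 (y⁻¹^2)) := by
  have hy0 := hy.1
  have h := (tendsto_sq_T_diag hy).const_mul (y⁻¹^2)
  rw [mul_one] at h
  apply h.congr
  intro n
  field_simp


lemma tendsto_T_num {x y : ℝ} (hx0 : 0 ≤ x) (hx1 : x ≤ 1) (hy : y ∈ Set.Ioo (0:ℝ) 1)
    (hyx : y ≠ x) :
    Tendsto (fun n : ℕ => T n (⌊(n:ℝ)*x⌋₊ + 1) y) atTop
      (𝓝 (Set.indicator (Set.Ioo 0 x) (fun z => z⁻¹^2) y)) := by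
  obtain ⟨hy0, hy1⟩ := hy
  set j : ℕ → ℕ := fun n => min (⌊(n:ℝ)*x⌋₊ + 1) n with hj
  have hTj : ∀ n : ℕ, T n (⌊(n:ℝ)*x⌋₊ + 1) y = T n (j n) y := fun n => T_trunc _ _ _
  have hfin : ∀ L : ℝ, Tendsto (fun n => y^2 * T n (j n) y) atTop (𝓝 L) →
      Tendsto (fun n : ℕ => T n (⌊(n:ℝ)*x⌋₊ + 1) y) atTop (𝓝 (y⁻¹^2 * L)) := by
    intro L hL
    apply (hL.const_mul (y⁻¹^2)).congr
    intro n
    rw [hTj n]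
    field_simp
  rcases lt_or_gt_of_ne hyx with hlt | hgt
  · rw [Set.indicator_of_mem (Set.mem_Ioo.mpr ⟨hy0, hlt⟩)]
    have key : Tendsto (fun n => y^2 * T n (j n) y) atTop (𝓝 1) := by
      have hbd : Tendsto (fun n : ℕ => (y*(1-y)/(x-y)^2) * (n:ℝ)⁻¹) atTop (𝓝 0) := by
        have := tendsto_inv_atTop_nhds_zero_nat.const_mul (y*(1-y)/(x-y)^2)
        rwa [mul_zero] at this
      have hdiff : Tendsto (fun n : ℕ => y^2*T n n y - y^2*T n (j n) y) atTop (𝓝 0) := by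
        apply tendsto_of_tendsto_of_tendsto_of_le_of_le' tendsto_const_nhds hbd
        · filter_upwards [eventually_ge_atTop 1] with n hn
          rw [sq_mul_T, sq_mul_T, sub_nonneg]
          exact Finset.sum_le_sum_of_subset_of_nonneg
            (Finset.Icc_subset_Icc_right (min_le_right _ _))
            (fun k _ _ => B_nonneg hy0.le hy1.le)
        · filter_upwards [eventually_ge_atTop 1] with n hn
          have hn1 : (1:ℝ) ≤ (n:ℝ) := by exact_mod_cast hn
          have hsub : Finset.Icc 2 (j n) ⊆ Finset.Icc 2 n :=
            Finset.Icc_subset_Icc_right (min_le_right _ _)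
          have hdiff_eq : y^2*T n n y - y^2*T n (j n) y
              = ∑ k ∈ Finset.Icc 2 n \ Finset.Icc 2 (j n), B n k y := by
            rw [sq_mul_T, sq_mul_T]
            have := Finset.sum_sdiff (f := fun k => B n k y) hsub
            linarith
          have hjx : (n:ℝ)*x < (j n : ℝ) + 1 := by
            have h1 : (n:ℝ)*x < (⌊(n:ℝ)*x⌋₊:ℝ) + 1 := Nat.lt_floor_add_one _
            have h2 : (n:ℝ)*x ≤ n := by nlinarith [Nat.cast_nonneg (α := ℝ) n]
            rcases min_cases (⌊(n:ℝ)*x⌋₊ + 1) n with ⟨he, _⟩ | ⟨he, _⟩ <;>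
              · rw [hj]; simp only [he]; push_cast; linarith
          have hch := cheb (n := n) hy0.le hy1.le (Finset.Icc 2 n \ Finset.Icc 2 (j n))
            (fun k hk => by
              simp only [Finset.mem_sdiff, Finset.mem_Icc] at hk
              exact Finset.mem_range.mpr (by omega))
            (c := (n:ℝ)*(x-y)) (by nlinarith)
            (fun k hk => by
              simp only [Finset.mem_sdiff, Finset.mem_Icc] at hk
              have hk' : j n + 1 ≤ k := by omega
              have hkr : (j n : ℝ) + 1 ≤ (k:ℝ) := by exact_mod_cast hk'
              have : (n:ℝ)*(x-y) ≤ (k:ℝ) - (n:ℝ)*y := by nlinarith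
              calc (n:ℝ)*(x-y) ≤ (k:ℝ) - (n:ℝ)*y := this
                _ = -((n:ℝ)*y - k) := by ring
                _ ≤ |(n:ℝ)*y - k| := neg_le_abs _)
          rw [hdiff_eq]
          refine hch.trans (le_of_eq ?_)
          have hne : (n:ℝ) ≠ 0 := by linarith
          have hxy : x - y ≠ 0 := by linarith
          field_simp
      have := (tendsto_sq_T_diag (Set.mem_Ioo.mpr ⟨hy0, hy1⟩)).sub hdiff
      norm_num at this
      exact this.congr fun n => by ring
    have := hfin 1 key
    rwa [mul_one] at this
  · have hnotmem : y ∉ Set.Ioo (0:ℝ) x := fun h => absurd h.2 (not_lt.mpr hgt.le)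
    rw [Set.indicator_of_notMem hnotmem]
    have key : Tendsto (fun n => y^2 * T n (j n) y) atTop (𝓝 0) := by
      set d : ℝ := y - x with hd
      have hd0 : 0 < d := by simp [hd]; linarith
      have hbd : Tendsto (fun n : ℕ => (4*(y*(1-y))/d^2) * (n:ℝ)⁻¹) atTop (𝓝 0) := by
        have := tendsto_inv_atTop_nhds_zero_nat.const_mul (4*(y*(1-y))/d^2)
        rwa [mul_zero] at this
      have hev : ∀ᶠ n : ℕ in atTop, 2 ≤ (n:ℝ)*d := by
        have := (tendsto_natCast_atTop_atTop (R := ℝ)).atTop_mul_const hd0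
        exact this.eventually_ge_atTop 2
      apply tendsto_of_tendsto_of_tendsto_of_le_of_le' tendsto_const_nhds hbd
      · filter_upwards with n
        exact mul_nonneg (by positivity) (T_nonneg hy0.le hy1.le)
      · filter_upwards [hev] with n hn
        have hn1 : (1:ℝ) ≤ (n:ℝ) := by nlinarith
        rw [sq_mul_T]
        have hch := cheb (n := n) hy0.le hy1.le (Finset.Icc 2 (j n))
          (fun k hk => by
            simp only [Finset.mem_Icc] at hk
            have : j n ≤ n := min_le_right _ _
            exact Finset.mem_range.mpr (by omega))
          (c := (n:ℝ)*d/2) (by nlinarith)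
          (fun k hk => by
            simp only [Finset.mem_Icc] at hk
            have hk2 : k ≤ ⌊(n:ℝ)*x⌋₊ + 1 := le_trans hk.2 (min_le_left _ _)
            have hkr : (k:ℝ) ≤ (⌊(n:ℝ)*x⌋₊:ℝ) + 1 := by exact_mod_cast hk2
            have hfl : (⌊(n:ℝ)*x⌋₊:ℝ) ≤ (n:ℝ)*x :=
              Nat.floor_le (by positivity)
            have : (n:ℝ)*d/2 ≤ (n:ℝ)*y - k := by
              simp only [hd] at *
              nlinarith
            exact this.trans (le_abs_self _))
        refine hch.trans (le_of_eq ?_)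
        have hne : (n:ℝ) ≠ 0 := by linarith
        have hdne : d ≠ 0 := ne_of_gt hd0
        field_simp
        ring
    have := hfin 0 key
    rwa [mul_zero] at this


lemma T_continuous (n j : ℕ) : Continuous fun y => T n j y := by
  unfold T
  apply continuous_finset_sum
  intro k _
  exact continuous_const.mul ((continuous_pow _).mul
    ((continuous_const.sub continuous_id).pow _))

lemma integral_T (Λ : Measure ℝ) [IsFiniteMeasure Λ] (n j : ℕ) :
    ∫ y in Set.Icc (0:ℝ) 1, T n j y ∂Λ
      = ∑ k ∈ Finset.Icc 2 j, (n.choose k : ℝ) * lamColl Λ n k := by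
  have hint : ∀ k ∈ Finset.Icc 2 j,
      IntegrableOn (fun y : ℝ => (n.choose k : ℝ) * (y^(k-2)*(1-y)^(n-k))) (Set.Icc 0 1) Λ := by
    intro k _
    apply Continuous.integrableOn_Icc
    exact continuous_const.mul ((continuous_pow _).mul
      ((continuous_const.sub continuous_id).pow _))
  simp only [T]
  rw [integral_finset_sum _ hint]
  refine Finset.sum_congr rfl fun k _ => ?_
  rw [MeasureTheory.integral_const_mul]
  rfl

end SPC

open SPC

/-- **Formula (2.4)**: assume `m_{-2} < ∞`. Then for every `x ∈ [0,1]` with `Λ({x}) = 0`,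
`lim_{n→∞} Σ_{k=1}^{⌊nx⌋} p_{n,k} = m_{-2}^{-1} ∫_{[0,x]} y^{-2} Λ(dy)`. -/
theorem sum_pColl_tendsto
    (Λ : Measure ℝ) [IsFiniteMeasure Λ] (hΛne : Λ ≠ 0)
    (hΛsupp : Λ (Set.Icc (0:ℝ) 1)ᶜ = 0) (hΛ0 : Λ {0} = 0) (hΛ1 : Λ {1} = 0)
    (hm2 : mm2 Λ < ∞) :
    ∀ x : ℝ, x ∈ Set.Icc (0:ℝ) 1 → Λ {x} = 0 →
      Tendsto (fun n : ℕ => ∑ k ∈ Finset.Icc 1 (Nat.floor ((n : ℝ) * x)), pColl Λ n k)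
        atTop
        (𝓝 (((∫⁻ y in Set.Icc (0:ℝ) x, ENNReal.ofReal (y⁻¹ ^ 2) ∂Λ) / mm2 Λ).toReal)) := by
  intro x hx hΛx
  obtain ⟨hx0, hx1⟩ := hx
  set Λ' := Λ.restrict (Set.Icc (0:ℝ) 1) with hΛ'
  have hnull : ∀ z : ℝ, Λ {z} = 0 → Λ' {z} = 0 := fun z hz =>
    le_antisymm (le_trans (Measure.restrict_apply_le _ _) hz.le) zero_le
  have haene : ∀ z : ℝ, Λ {z} = 0 → ∀ᵐ y ∂Λ', y ≠ z := by
    intro z hz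
    rw [ae_iff]
    convert hnull z hz using 2
    ext w; simp
  have hae : ∀ᵐ y ∂Λ', y ∈ Set.Ioo (0:ℝ) 1 ∧ y ≠ x := by
    have h1 : ∀ᵐ y ∂Λ', y ∈ Set.Icc (0:ℝ) 1 := ae_restrict_mem measurableSet_Icc
    filter_upwards [h1, haene 0 hΛ0, haene 1 hΛ1, haene x hΛx] with y hy h0 hone hx'
    exact ⟨⟨lt_of_le_of_ne hy.1 (Ne.symm h0), lt_of_le_of_ne hy.2 hone⟩, hx'⟩
  have hf0meas : Measurable fun y : ℝ => y⁻¹^2 := measurable_inv.pow_const 2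
  have hbound_int : Integrable (fun y : ℝ => y⁻¹^2) Λ' := by
    refine ⟨hf0meas.aestronglyMeasurable, ?_⟩
    rw [hasFiniteIntegral_iff_ofReal (Eventually.of_forall fun y => by positivity)]
    exact hm2
  have hbound : ∀ (jf : ℕ → ℕ) (n : ℕ), ∀ᵐ y ∂Λ', ‖T n (jf n) y‖ ≤ y⁻¹^2 := by
    intro jf n
    filter_upwards [hae] with y hy
    rw [Real.norm_of_nonneg (T_nonneg hy.1.1.le hy.1.2.le)]
    exact T_le hy.1
  -- numerator convergence
  have hnum : Tendsto (fun n : ℕ => ∫ y, T n (⌊(n:ℝ)*x⌋₊ + 1) y ∂Λ') atTop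
      (𝓝 (∫ y, Set.indicator (Set.Ioo 0 x) (fun z => z⁻¹^2) y ∂Λ')) := by
    apply tendsto_integral_of_dominated_convergence (fun y => y⁻¹^2)
      (fun n => (T_continuous n _).aestronglyMeasurable) hbound_int
      (hbound _)
    filter_upwards [hae] with y hy
    exact tendsto_T_num hx0 hx1 hy.1 hy.2
  -- denominator convergence
  have hden : Tendsto (fun n : ℕ => ∫ y, T n n y ∂Λ') atTop
      (𝓝 (∫ y, y⁻¹^2 ∂Λ')) := by
    apply tendsto_integral_of_dominated_convergence (fun y => y⁻¹^2)
      (fun n => (T_continuous n n).aestronglyMeasurable) hbound_int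
      (hbound id)
    filter_upwards [hae] with y hy
    exact tendsto_T_diag hy.1
  -- value of the denominator limit
  have hDval : ∫ y, y⁻¹^2 ∂Λ' = (mm2 Λ).toReal := by
    rw [integral_eq_lintegral_of_nonneg_ae (Eventually.of_forall fun y => by positivity)
      hf0meas.aestronglyMeasurable]
    rfl
  -- value of the numerator limit
  set L : ENNReal := ∫⁻ y in Set.Icc (0:ℝ) x, ENNReal.ofReal (y⁻¹ ^ 2) ∂Λ with hL
  have hIoo_sub : Set.Ioo (0:ℝ) x ⊆ Set.Icc (0:ℝ) 1 := fun y hy =>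
    ⟨hy.1.le, hy.2.le.trans hx1⟩
  have hsetae : (Set.Ioo (0:ℝ) x : Set ℝ) =ᵐ[Λ] Set.Icc (0:ℝ) x := by
    rw [MeasureTheory.ae_eq_set]
    constructor
    · rw [Set.diff_eq_empty.mpr Set.Ioo_subset_Icc_self]; exact measure_empty
    · apply measure_mono_null _ (measure_union_null hΛ0 hΛx)
      intro y hy
      simp only [Set.mem_diff, Set.mem_Icc, Set.mem_Ioo, not_and, not_lt] at hy
      obtain ⟨⟨h1, h2⟩, h3⟩ := hy
      rcases eq_or_lt_of_le h1 with h | h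
      · exact Or.inl h.symm
      · exact Or.inr (le_antisymm h2 (h3 h))
  have hN : ∫ y, Set.indicator (Set.Ioo 0 x) (fun z => z⁻¹^2) y ∂Λ' = L.toReal := by
    rw [integral_indicator measurableSet_Ioo]
    rw [show ∫ y in Set.Ioo (0:ℝ) x, y⁻¹^2 ∂Λ' = ∫ y in Set.Ioo (0:ℝ) x, y⁻¹^2 ∂Λ by
      rw [hΛ', Measure.restrict_restrict measurableSet_Ioo,
        Set.inter_eq_self_of_subset_left hIoo_sub]]
    rw [integral_eq_lintegral_of_nonneg_ae (Eventually.of_forall fun y => by positivity)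
      hf0meas.aestronglyMeasurable]
    congr 1
    exact setLIntegral_congr hsetae
  -- mm2 ≠ 0
  have hM0 : mm2 Λ ≠ 0 := by
    intro h
    have hmeas : Measurable fun y : ℝ => ENNReal.ofReal (y⁻¹^2) := hf0meas.ennreal_ofReal
    rw [mm2, lintegral_eq_zero_iff hmeas] at h
    have h2 : ∀ᵐ y ∂Λ', y = 0 := by
      filter_upwards [h] with y hy
      by_contra hy0
      rw [Pi.zero_apply, ENNReal.ofReal_eq_zero] at hy
      have : (0:ℝ) < y⁻¹^2 := by positivity
      linarith
    have hc : Λ' ({(0:ℝ)}ᶜ) = 0 := by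
      have h3 := ae_iff.mp h2
      rw [show {a : ℝ | ¬ a = 0} = ({(0:ℝ)}ᶜ) by ext w; simp] at h3
      exact h3
    have huniv : Λ' Set.univ = 0 := by
      rw [← Set.union_compl_self ({(0:ℝ)} : Set ℝ)]
      apply measure_union_null (hnull 0 hΛ0) hc
    have hIcc : Λ (Set.Icc (0:ℝ) 1) = 0 := by
      rw [hΛ', Measure.restrict_apply_univ] at huniv
      exact huniv
    have : Λ Set.univ = 0 := by
      rw [← Set.union_compl_self (Set.Icc (0:ℝ) 1)]
      exact measure_union_null hIcc hΛsupp
    exact hΛne (Measure.measure_univ_eq_zero.mp this)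
  have hMne : (mm2 Λ).toReal ≠ 0 := ENNReal.toReal_ne_zero.mpr ⟨hM0, hm2.ne⟩
  -- assemble
  have hlam : ∀ n : ℕ, lamTot Λ n = ∫ y, T n n y ∂Λ' := by
    intro n
    rw [hΛ']
    exact (integral_T Λ n n).symm
  have hsum_eq : ∀ n : ℕ, ∑ k ∈ Finset.Icc 1 (⌊(n:ℝ)*x⌋₊), pColl Λ n k
      = (∫ y, T n (⌊(n:ℝ)*x⌋₊ + 1) y ∂Λ') / lamTot Λ n := by
    intro n
    have hre : ∑ k ∈ Finset.Icc 1 (⌊(n:ℝ)*x⌋₊), (n.choose (k+1) : ℝ) * lamColl Λ n (k+1)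
        = ∑ k ∈ Finset.Icc 2 (⌊(n:ℝ)*x⌋₊ + 1), (n.choose k : ℝ) * lamColl Λ n k := by
      rw [show Finset.Icc 2 (⌊(n:ℝ)*x⌋₊ + 1)
          = (Finset.Icc 1 (⌊(n:ℝ)*x⌋₊)).map (addRightEmbedding 1) by
        rw [Finset.map_add_right_Icc], Finset.sum_map]
      rfl
    simp only [pColl]
    rw [← Finset.sum_div, hre, hΛ', integral_T Λ n]
  have hfinal := hnum.div (Tendsto.congr (fun n => (hlam n).symm) hden) (by rwa [hDval])
  rw [hN, hDval] at hfinal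
  rw [ENNReal.toReal_div]
  exact Tendsto.congr (fun n => (hsum_eq n).symm) hfinal
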